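/- Let ω be a triangular weight on the Grigorchuk group, i.e., ω(x) ≤ ω(y) + ω(z) for every ordering (x,y,z) of {b,c,d}. Then every element g ∈ G admits a minimal-weight representative word of the form [*]a*a*a⋯*a[*], where each * ∈ {b,c,d}, letters a and elements of {b,c,d} alternate, and the initial and final * are optional. -/

import Mathlib

/-- The generator `a` of the Grigorchuk group, acting on finite binary sequences. -/
def grigA : List Bool → List Bool
  | [] => []
  | x :: σ => (!x) :: σ

mutual
  /-- The generator `b` of the Grigorchuk group. -/
  def grigB : List Bool → List Bool
    | [] => []
    | false :: σ => false :: grigA σ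
    | true :: σ => true :: grigC σ
  /-- The generator `c` of the Grigorchuk group. -/
  def grigC : List Bool → List Bool
    | [] => []
    | false :: σ => false :: grigA σ
    | true :: σ => true :: grigD σ
  /-- The generator `d` of the Grigorchuk group. -/
  def grigD : List Bool → List Bool
    | [] => []
    | false :: σ => false :: σ
    | true :: σ => true :: grigB σ
end

theorem grigA_involutive : Function.Involutive grigA := by
  intro l
  rcases l with _ | ⟨x, σ⟩
  · rfl
  · cases x <;> rfl

theorem grigBCD_involutive :
    ∀ l : List Bool, grigB (grigB l) = l ∧ grigC (grigC l) = l ∧ grigD (grigD l) = l := by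
  intro l
  induction l with
  | nil => exact ⟨rfl, rfl, rfl⟩
  | cons x σ ih =>
      cases x <;>
        simp [grigB, grigC, grigD, grigA_involutive σ, ih.1, ih.2.1, ih.2.2]

theorem grigB_involutive : Function.Involutive grigB := fun l => (grigBCD_involutive l).1
theorem grigC_involutive : Function.Involutive grigC := fun l => (grigBCD_involutive l).2.1
theorem grigD_involutive : Function.Involutive grigD := fun l => (grigBCD_involutive l).2.2

/-- The generator `a` as a permutation of binary sequences. -/
def aP : Equiv.Perm (List Bool) := grigA_involutive.toPerm
/-- The generator `b` as a permutation of binary sequences. -/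
def bP : Equiv.Perm (List Bool) := grigB_involutive.toPerm
/-- The generator `c` as a permutation of binary sequences. -/
def cP : Equiv.Perm (List Bool) := grigC_involutive.toPerm
/-- The generator `d` as a permutation of binary sequences. -/
def dP : Equiv.Perm (List Bool) := grigD_involutive.toPerm

/-- The Grigorchuk group, as the group of permutations of finite binary sequences
generated by `a`, `b`, `c`, `d`. -/
def Grig : Subgroup (Equiv.Perm (List Bool)) := Subgroup.closure {aP, bP, cP, dP}

/-- `a` as an element of the Grigorchuk group. -/
def ga : Grig := ⟨aP, Subgroup.subset_closure (by simp)⟩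
/-- `b` as an element of the Grigorchuk group. -/
def gb : Grig := ⟨bP, Subgroup.subset_closure (by simp)⟩
/-- `c` as an element of the Grigorchuk group. -/
def gc : Grig := ⟨cP, Subgroup.subset_closure (by simp)⟩
/-- `d` as an element of the Grigorchuk group. -/
def gd : Grig := ⟨dP, Subgroup.subset_closure (by simp)⟩

/-- A permutation of binary sequences preserves the first letter. -/
def FixesFirst (g : Equiv.Perm (List Bool)) : Prop :=
  ∀ (x : Bool) (σ : List Bool), ∃ σ' : List Bool, g (x :: σ) = x :: σ'
/-- The weight (norm) on a group `G` induced by a weight function `ω` on a generating set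
`S`: the infimum of the total weights of words over `S` representing `g`. -/
noncomputable def wordWeight {G : Type*} [Group G] (S : Set G) (ω : G → ℝ) (g : G) : ℝ :=
  sInf ((fun l : List G => (l.map ω).sum) '' {l : List G | (∀ s ∈ l, s ∈ S) ∧ l.prod = g})

/-- The growth function of `G` with respect to the generating set `S` and weight `ω`:
the number of elements of weight at most `x`. -/
noncomputable def growth {G : Type*} [Group G] (S : Set G) (ω : G → ℝ) (x : ℝ) : ℕ :=
  Nat.card {g : G | wordWeight S ω g ≤ x}

/-- The word length of `g` with respect to the generating set `S`. -/
noncomputable def wordLength {G : Type*} [Group G] (S : Set G) (g : G) : ℕ :=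
  sInf {n : ℕ | ∃ l : List G, (∀ s ∈ l, s ∈ S) ∧ l.prod = g ∧ l.length = n}
section GrigAux

/-! ### Relations among the generators -/

theorem grig_comp_rels : ∀ l : List Bool,
    grigB (grigC l) = grigD l ∧ grigC (grigB l) = grigD l ∧
    grigB (grigD l) = grigC l ∧ grigD (grigB l) = grigC l ∧
    grigC (grigD l) = grigB l ∧ grigD (grigC l) = grigB l := by
  intro l
  induction l with
  | nil => exact ⟨rfl, rfl, rfl, rfl, rfl, rfl⟩
  | cons x σ ih =>
      cases x <;>
        simp [grigB, grigC, grigD, grigA_involutive σ, ih.1, ih.2.1, ih.2.2.1,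
          ih.2.2.2.1, ih.2.2.2.2.1, ih.2.2.2.2.2]

theorem ga_sq : ga * ga = 1 :=
  Subtype.ext (Equiv.ext fun l => grigA_involutive l)
theorem gb_sq : gb * gb = 1 :=
  Subtype.ext (Equiv.ext fun l => grigB_involutive l)
theorem gc_sq : gc * gc = 1 :=
  Subtype.ext (Equiv.ext fun l => grigC_involutive l)
theorem gd_sq : gd * gd = 1 :=
  Subtype.ext (Equiv.ext fun l => grigD_involutive l)
theorem grel_bc : gb * gc = gd :=
  Subtype.ext (Equiv.ext fun l => (grig_comp_rels l).1)
theorem grel_cb : gc * gb = gd :=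
  Subtype.ext (Equiv.ext fun l => (grig_comp_rels l).2.1)
theorem grel_bd : gb * gd = gc :=
  Subtype.ext (Equiv.ext fun l => (grig_comp_rels l).2.2.1)
theorem grel_db : gd * gb = gc :=
  Subtype.ext (Equiv.ext fun l => (grig_comp_rels l).2.2.2.1)
theorem grel_cd : gc * gd = gb :=
  Subtype.ext (Equiv.ext fun l => (grig_comp_rels l).2.2.2.2.1)
theorem grel_dc : gd * gc = gb :=
  Subtype.ext (Equiv.ext fun l => (grig_comp_rels l).2.2.2.2.2)

/-! ### The abstract alphabet -/

inductive GLetter : Type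
  | a | b | c | d
deriving DecidableEq

instance : Finite GLetter := by
  have : GLetter ≃ Fin 4 :=
    ⟨fun x => match x with | .a => 0 | .b => 1 | .c => 2 | .d => 3,
     fun n => match n with | 0 => .a | 1 => .b | 2 => .c | 3 => .d,
     by intro x; cases x <;> rfl, by intro n; fin_cases n <;> rfl⟩
  exact Finite.of_equiv _ this.symm

def GLetter.toG : GLetter → Grig
  | .a => ga | .b => gb | .c => gc | .d => gd

theorem toG_mem_S (x : GLetter) : x.toG ∈ ({ga, gb, gc, gd} : Set Grig) := by
  cases x <;> simp [GLetter.toG]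

theorem toG_sq (x : GLetter) : x.toG * x.toG = 1 := by
  cases x <;> simp [GLetter.toG, ga_sq, gb_sq, gc_sq, gd_sq]

theorem toG_inv (x : GLetter) : x.toG⁻¹ = x.toG :=
  inv_eq_of_mul_eq_one_right (toG_sq x)

/-- The product of two distinct letters from `{b,c,d}` (junk value otherwise). -/
def gmul3 : GLetter → GLetter → GLetter
  | .b, .c => .d | .c, .b => .d
  | .b, .d => .c | .d, .b => .c
  | .c, .d => .b | .d, .c => .b
  | _, _ => .a

/-- One step of reduction: prepend a letter to a reduced word. -/
def gred : GLetter → List GLetter → List GLetter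
  | x, [] => [x]
  | .a, .a :: t => t
  | .a, y :: t => .a :: y :: t
  | .b, .a :: t => .b :: .a :: t
  | .c, .a :: t => .c :: .a :: t
  | .d, .a :: t => .d :: .a :: t
  | .b, .b :: t => t
  | .c, .c :: t => t
  | .d, .d :: t => t
  | .b, .c :: t => .d :: t
  | .c, .b :: t => .d :: t
  | .b, .d :: t => .c :: t
  | .d, .b :: t => .c :: t
  | .c, .d :: t => .b :: t
  | .d, .c :: t => .b :: t

/-- Full normalization of a word. -/
def gnorm : List GLetter → List GLetter
  | [] => []
  | x :: t => gred x (gnorm t)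

theorem gred_prod (x : GLetter) (t : List GLetter) :
    ((gred x t).map GLetter.toG).prod = x.toG * ((t.map GLetter.toG)).prod := by
  match x, t with
  | x, [] => simp [gred]
  | .a, .a :: t => simp [gred, GLetter.toG, ← mul_assoc, ga_sq]
  | .a, .b :: t | .a, .c :: t | .a, .d :: t => simp [gred]
  | .b, .a :: t | .c, .a :: t | .d, .a :: t => simp [gred]
  | .b, .b :: t => simp [gred, GLetter.toG, ← mul_assoc, gb_sq]
  | .c, .c :: t => simp [gred, GLetter.toG, ← mul_assoc, gc_sq]
  | .d, .d :: t => simp [gred, GLetter.toG, ← mul_assoc, gd_sq]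
  | .b, .c :: t => simp [gred, GLetter.toG, ← mul_assoc, grel_bc]
  | .c, .b :: t => simp [gred, GLetter.toG, ← mul_assoc, grel_cb]
  | .b, .d :: t => simp [gred, GLetter.toG, ← mul_assoc, grel_bd]
  | .d, .b :: t => simp [gred, GLetter.toG, ← mul_assoc, grel_db]
  | .c, .d :: t => simp [gred, GLetter.toG, ← mul_assoc, grel_cd]
  | .d, .c :: t => simp [gred, GLetter.toG, ← mul_assoc, grel_dc]

theorem gnorm_prod (l : List GLetter) :
    ((gnorm l).map GLetter.toG).prod = (l.map GLetter.toG).prod := by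
  induction l with
  | nil => rfl
  | cons x t ih => rw [gnorm, gred_prod, ih]; simp

/-! ### Weights -/

variable (ω : Grig → ℝ)

/-- Weight of a word of letters. -/
def wsum (l : List GLetter) : ℝ := (l.map (fun x => ω x.toG)).sum

theorem wsum_nil : wsum ω [] = 0 := rfl
theorem wsum_cons (x : GLetter) (t : List GLetter) :
    wsum ω (x :: t) = ω x.toG + wsum ω t := by simp [wsum]

theorem gred_wsum (hω : ∀ s ∈ ({ga, gb, gc, gd} : Set Grig), 0 < ω s)
    (htri : ω gb ≤ ω gc + ω gd ∧ ω gc ≤ ω gb + ω gd ∧ ω gd ≤ ω gb + ω gc)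
    (x : GLetter) (t : List GLetter) :
    wsum ω (gred x t) ≤ ω x.toG + wsum ω t := by
  have ha : 0 < ω ga := hω ga (by simp)
  have hb : 0 < ω gb := hω gb (by simp)
  have hc : 0 < ω gc := hω gc (by simp)
  have hd : 0 < ω gd := hω gd (by simp)
  obtain ⟨t1, t2, t3⟩ := htri
  match x, t with
  | x, [] => simp [gred, wsum_cons, wsum_nil]
  | .a, .a :: t => simp [gred, wsum_cons, GLetter.toG]; nlinarith
  | .a, .b :: t | .a, .c :: t | .a, .d :: t => simp [gred, wsum_cons]
  | .b, .a :: t | .c, .a :: t | .d, .a :: t => simp [gred, wsum_cons]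
  | .b, .b :: t => simp [gred, wsum_cons, GLetter.toG]; nlinarith
  | .c, .c :: t => simp [gred, wsum_cons, GLetter.toG]; nlinarith
  | .d, .d :: t => simp [gred, wsum_cons, GLetter.toG]; nlinarith
  | .b, .c :: t | .c, .b :: t => simp [gred, wsum_cons, GLetter.toG]; nlinarith
  | .b, .d :: t | .d, .b :: t => simp [gred, wsum_cons, GLetter.toG]; nlinarith
  | .c, .d :: t | .d, .c :: t => simp [gred, wsum_cons, GLetter.toG]; nlinarith

theorem gnorm_wsum (hω : ∀ s ∈ ({ga, gb, gc, gd} : Set Grig), 0 < ω s)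
    (htri : ω gb ≤ ω gc + ω gd ∧ ω gc ≤ ω gb + ω gd ∧ ω gd ≤ ω gb + ω gc)
    (l : List GLetter) : wsum ω (gnorm l) ≤ wsum ω l := by
  induction l with
  | nil => simp [gnorm]
  | cons x t ih =>
      rw [gnorm, wsum_cons]
      exact le_trans (gred_wsum ω hω htri x (gnorm t)) (by linarith)

/-! ### Alternation -/

/-- The alternation relation on letters. -/
def Rl (x y : GLetter) : Prop := (x = .a ∧ y ≠ .a) ∨ (x ≠ .a ∧ y = .a)

theorem gred_alt (x : GLetter) (t : List GLetter) (ht : List.Chain' Rl t) :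
    List.Chain' Rl (gred x t) := by
  match x, t with
  | x, [] => simp [gred, List.Chain']
  | .a, .a :: t => exact ht.tail
  | .b, .b :: t | .c, .c :: t | .d, .d :: t => exact ht.tail
  | .a, .b :: t | .a, .c :: t | .a, .d :: t =>
      exact List.IsChain.cons_cons (by simp [Rl]) ht
  | .b, .a :: t | .c, .a :: t | .d, .a :: t =>
      exact List.IsChain.cons_cons (by simp [Rl]) ht
  | .b, .c :: t | .c, .b :: t | .b, .d :: t | .d, .b :: t | .c, .d :: t | .d, .c :: t =>
      show List.Chain' Rl (_ :: t)
      match t, ht with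
      | [], _ => simp [List.Chain']
      | w :: t', ht =>
          have h1 : Rl _ w := (List.isChain_cons_cons.mp ht).1
          have h2 := (List.isChain_cons_cons.mp ht).2
          refine List.IsChain.cons_cons ?_ h2
          rcases h1 with ⟨h, hw⟩ | ⟨h, hw⟩
          · exact absurd h (by simp)
          · exact Or.inr ⟨by simp, hw⟩

theorem gnorm_alt (l : List GLetter) : List.Chain' Rl (gnorm l) := by
  induction l with
  | nil => simp [gnorm, List.Chain']
  | cons x t ih => exact gred_alt x (gnorm t) ih

/-! ### Every element of Grig is represented by a letter word -/

theorem exists_letter_word (g : Grig) :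
    ∃ l : List GLetter, ((l.map GLetter.toG).prod : Grig) = g := by
  have hg := g.2
  have key : ∀ x ∈ Subgroup.closure ({aP, bP, cP, dP} : Set (Equiv.Perm (List Bool))),
      ∃ l : List GLetter, (((l.map GLetter.toG).prod : Grig) : Equiv.Perm (List Bool)) = x := by
    intro x hx
    induction hx using Subgroup.closure_induction with
    | mem s hs =>
        rcases hs with h | h | h | h
        · exact ⟨[.a], by simp [GLetter.toG, h, ga]⟩
        · exact ⟨[.b], by simp [GLetter.toG, h, gb]⟩
        · exact ⟨[.c], by simp [GLetter.toG, h, gc]⟩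
        · simp only [Set.mem_singleton_iff] at h
          exact ⟨[.d], by simp [GLetter.toG, h, gd]⟩
    | one => exact ⟨[], by simp⟩
    | mul u v hu hv ihu ihv =>
        obtain ⟨lu, hlu⟩ := ihu
        obtain ⟨lv, hlv⟩ := ihv
        refine ⟨lu ++ lv, ?_⟩
        rw [List.map_append, List.prod_append, Subgroup.coe_mul, hlu, hlv]
    | inv u hu ihu =>
        obtain ⟨lu, hlu⟩ := ihu
        refine ⟨lu.reverse, ?_⟩
        have : ((lu.reverse.map GLetter.toG).prod : Grig) = ((lu.map GLetter.toG).prod)⁻¹ := by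
          rw [List.prod_inv_reverse, List.map_map, ← List.map_reverse]
          exact congrArg List.prod
            (List.map_congr_left fun x _ => (toG_inv x).symm)
        rw [this, ← hlu]
        simp
  obtain ⟨l, hl⟩ := key g hg
  exact ⟨l, Subtype.ext hl⟩

/-! ### Length bounds -/

theorem wsum_ge (δ : ℝ) (hδ : ∀ x : GLetter, δ ≤ ω x.toG) (l : List GLetter) :
    (l.length : ℝ) * δ ≤ wsum ω l := by
  induction l with
  | nil => simp [wsum_nil]
  | cons x t ih =>
      rw [wsum_cons, List.length_cons]
      have := hδ x
      push_cast
      nlinarith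

end GrigAux
section GrigAux2

theorem toG_ne_a {x : GLetter} (hx : x ≠ .a) : x.toG ∈ ({gb, gc, gd} : Set Grig) := by
  cases x
  · exact absurd rfl hx
  · simp [GLetter.toG]
  · simp [GLetter.toG]
  · simp [GLetter.toG]

theorem toLetters : ∀ u : List Grig, (∀ s ∈ u, s ∈ ({ga, gb, gc, gd} : Set Grig)) →
    ∃ v : List GLetter, v.map GLetter.toG = u := by
  intro u
  induction u with
  | nil => exact fun _ => ⟨[], rfl⟩
  | cons s t ih =>
      intro h
      obtain ⟨v, hv⟩ := ih (fun x hx => h x (List.mem_cons_of_mem s hx))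
      have hs := h s (List.mem_cons_self (a := s) (l := t))
      rcases hs with h1 | h1 | h1 | h1
      · exact ⟨.a :: v, by simp [GLetter.toG, hv, h1]⟩
      · exact ⟨.b :: v, by simp [GLetter.toG, hv, h1]⟩
      · exact ⟨.c :: v, by simp [GLetter.toG, hv, h1]⟩
      · simp only [Set.mem_singleton_iff] at h1
        exact ⟨.d :: v, by simp [GLetter.toG, hv, h1]⟩

end GrigAux2

/-- For a triangular weight `ω` on the Grigorchuk group (i.e. each of `ω(b), ω(c), ω(d)`
is at most the sum of the other two), every element admits a minimal-weight representative
word over `{a, b, c, d}` in which the letter `a` alternates with letters from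
`{b, c, d}` (the form `[*]a*a*a⋯*a[*]`). -/
theorem grigorchuk_minimal_alternating_form
    (ω : Grig → ℝ) (hω : ∀ s ∈ ({ga, gb, gc, gd} : Set Grig), 0 < ω s)
    (htri : ω gb ≤ ω gc + ω gd ∧ ω gc ≤ ω gb + ω gd ∧ ω gd ≤ ω gb + ω gc) :
    ∀ g : Grig, ∃ l : List Grig,
      (∀ s ∈ l, s ∈ ({ga, gb, gc, gd} : Set Grig)) ∧
      l.prod = g ∧
      (l.map ω).sum = wordWeight ({ga, gb, gc, gd} : Set Grig) ω g ∧
      List.Chain' (fun x y =>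
        (x = ga ∧ y ∈ ({gb, gc, gd} : Set Grig)) ∨
        (x ∈ ({gb, gc, gd} : Set Grig) ∧ y = ga)) l := by
  intro g
  have ha : 0 < ω ga := hω ga (by simp)
  have hb : 0 < ω gb := hω gb (by simp)
  have hc : 0 < ω gc := hω gc (by simp)
  have hd : 0 < ω gd := hω gd (by simp)
  -- a uniform positive lower bound on letter weights
  set δ : ℝ := min (min (ω ga) (ω gb)) (min (ω gc) (ω gd)) with hδdef
  have hδpos : 0 < δ := by
    simp only [hδdef, lt_min_iff]
    exact ⟨⟨ha, hb⟩, hc, hd⟩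
  have hδle : ∀ x : GLetter, δ ≤ ω x.toG := by
    intro x
    cases x <;> simp [GLetter.toG, hδdef]
  -- a first representing word and its normal form
  obtain ⟨l₁, hl₁⟩ := exists_letter_word g
  set n₀ := gnorm l₁ with hn₀def
  have hn₀prod : ((n₀.map GLetter.toG).prod : Grig) = g := by
    rw [hn₀def, gnorm_prod]; exact hl₁
  set C := wsum ω n₀ with hCdef
  -- the finite set of candidate alternating words
  set B : Set (List GLetter) :=
    {l | List.Chain' Rl l ∧ ((l.map GLetter.toG).prod : Grig) = g ∧ wsum ω l ≤ C} with hBdef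
  have hn₀B : n₀ ∈ B := ⟨gnorm_alt l₁, hn₀prod, le_rfl⟩
  obtain ⟨N, hN⟩ := exists_nat_ge (C / δ)
  have hBsub : B ⊆ {l : List GLetter | l.length ≤ N} := by
    intro l hl
    have h1 : (l.length : ℝ) * δ ≤ wsum ω l := wsum_ge ω δ hδle l
    have h2 : C ≤ (N : ℝ) * δ := by
      rw [div_le_iff₀ hδpos] at hN
      exact hN
    have h3 : (l.length : ℝ) * δ ≤ (N : ℝ) * δ := le_trans h1 (le_trans hl.2.2 h2)
    have h4 : (l.length : ℝ) ≤ (N : ℝ) := le_of_mul_le_mul_right h3 hδpos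
    exact_mod_cast h4
  have hBfin : B.Finite := (List.finite_length_le GLetter N).subset hBsub
  obtain ⟨l₀, hl₀B, hl₀min⟩ := Set.exists_min_image B (wsum ω) hBfin ⟨n₀, hn₀B⟩
  -- the minimum over B is a lower bound for all representing words
  have claim : ∀ u : List Grig, (∀ s ∈ u, s ∈ ({ga, gb, gc, gd} : Set Grig)) →
      u.prod = g → wsum ω l₀ ≤ (u.map ω).sum := by
    intro u hu hup
    obtain ⟨v, hv⟩ := toLetters u hu
    have hsum : (u.map ω).sum = wsum ω v := by
      rw [← hv, wsum, List.map_map]; rfl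
    have hvprod : ((v.map GLetter.toG).prod : Grig) = g := by rw [hv]; exact hup
    have h1 : wsum ω (gnorm v) ≤ wsum ω v := gnorm_wsum ω hω htri v
    by_cases hcase : wsum ω (gnorm v) ≤ C
    · have hmem : gnorm v ∈ B := ⟨gnorm_alt v, by rw [gnorm_prod]; exact hvprod, hcase⟩
      have := hl₀min _ hmem
      linarith [hsum ▸ (le_trans this h1)]
    · have h2 : wsum ω l₀ ≤ C := hl₀min n₀ hn₀B
      push_neg at hcase
      linarith [hsum ▸ (le_trans (le_of_lt hcase) h1 : C ≤ wsum ω v)]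
  -- assemble the answer
  refine ⟨l₀.map GLetter.toG, ?_, hl₀B.2.1, ?_, ?_⟩
  · intro s hs
    obtain ⟨x, _, rfl⟩ := List.mem_map.mp hs
    exact toG_mem_S x
  · have heq : ((l₀.map GLetter.toG).map ω).sum = wsum ω l₀ := by
      rw [wsum, List.map_map]; rfl
    rw [heq, wordWeight]
    have hmem : wsum ω l₀ ∈
        ((fun l : List Grig => (l.map ω).sum) ''
          {l : List Grig | (∀ s ∈ l, s ∈ ({ga, gb, gc, gd} : Set Grig)) ∧ l.prod = g}) := by
      refine ⟨l₀.map GLetter.toG, ⟨?_, hl₀B.2.1⟩, heq⟩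
      intro s hs
      obtain ⟨x, _, rfl⟩ := List.mem_map.mp hs
      exact toG_mem_S x
    apply le_antisymm
    · apply le_csInf ⟨_, hmem⟩
      rintro w ⟨u, ⟨hu1, hu2⟩, rfl⟩
      exact claim u hu1 hu2
    · apply csInf_le ?_ hmem
      refine ⟨0, ?_⟩
      rintro w ⟨u, ⟨hu1, _⟩, rfl⟩
      apply List.sum_nonneg
      intro r hr
      obtain ⟨s, hs, rfl⟩ := List.mem_map.mp hr
      exact le_of_lt (hω s (hu1 s hs))
  · simp only [List.Chain']; rw [List.isChain_map]
    refine (hl₀B.1).imp ?_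
    intro x y hxy
    rcases hxy with ⟨hx, hy⟩ | ⟨hx, hy⟩
    · exact Or.inl ⟨by rw [hx]; rfl, toG_ne_a hy⟩
    · exact Or.inr ⟨toG_ne_a hx, by rw [hy]; rfl⟩
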